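/- Let A be a finite-dimensional k-algebra with a partial order on its weights such that End_A(P(i)) ≅ k for all indecomposable projectives P(i) and Hom_A(P(j), P(i)) ≠ 0 only if i ⊴ j. Then A is quasi-hereditary: it admits a chain of two-sided ideals 0 = J₋₁ ⊆ J₀ ⊆ ⋯ ⊆ Jₙ = A such that each Jₗ/J_{l-1} is a heredity ideal in A/J_{l-1}. -/

import Mathlib

open scoped TensorProduct DirectSum

/-- The corner subspace `f·S·e` of an algebra `A`, for `S ⊆ A`. -/
def cornerSpace (k : Type*) [Field k] {A : Type*} [Ring A] [Algebra k A]
    (f e : A) (S : Set A) : Submodule k A :=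
  Submodule.span k {x | ∃ a ∈ S, x = f * a * e}

/-- Multiplication, as a linear map on the tensor product of two subspaces of an algebra. -/
noncomputable def mulTensor (k : Type*) [Field k] {A : Type*} [Ring A] [Algebra k A]
    (M N : Submodule k A) : (M ⊗[k] N) →ₗ[k] A :=
  TensorProduct.lift ((LinearMap.mul k A).domRestrict₁₂ M N)

/-- The multiplication map `⊕_l (e_j·P·e_l) ⊗ (e_l·M·e_i) → A`. -/
noncomputable def reedyMulMap (k : Type*) [Field k] {A : Type*} [Ring A] [Algebra k A]
    {ι : Type*} [Fintype ι] [DecidableEq ι]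
    (e : ι → A) (P M : Set A) (j i : ι) :
    (⨁ l : ι, (↥(cornerSpace k (e j) (e l) P) ⊗[k] ↥(cornerSpace k (e l) (e i) M))) →ₗ[k] A :=
  DirectSum.toModule k ι A fun l =>
    mulTensor k (cornerSpace k (e j) (e l) P) (cornerSpace k (e l) (e i) M)

/-- A Reedy algebra structure on `A`: a complete set of pairwise orthogonal idempotents
`e`, a degree function `deg`, and unital subalgebras `Ap = A⁺`, `Am = A⁻` containing the
idempotents, such that the corners of `A⁺` are upward directed and one-dimensional on the
diagonal, the corners of `A⁻` are downward directed and one-dimensional on the diagonal, and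
multiplication induces isomorphisms `⊕_l e_j A⁺ e_l ⊗ e_l A⁻ e_i ≅ e_j A e_i`. -/
structure IsReedy (k : Type*) [Field k] {A : Type*} [Ring A] [Algebra k A]
    {ι : Type*} [Fintype ι] [DecidableEq ι]
    (e : ι → A) (deg : ι → ℕ) (Ap Am : Subalgebra k A) : Prop where
  idem : ∀ i, IsIdempotentElem (e i)
  orth : ∀ i j, i ≠ j → e i * e j = 0
  complete : ∑ i, e i = 1
  memP : ∀ i, e i ∈ Ap
  memM : ∀ i, e i ∈ Am
  diagP : ∀ i, Module.finrank k (cornerSpace k (e i) (e i) (Ap : Set A)) = 1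
  offP : ∀ i j, i ≠ j → cornerSpace k (e j) (e i) (Ap : Set A) ≠ ⊥ → deg i < deg j
  diagM : ∀ i, Module.finrank k (cornerSpace k (e i) (e i) (Am : Set A)) = 1
  offM : ∀ i j, i ≠ j → cornerSpace k (e j) (e i) (Am : Set A) ≠ ⊥ → deg j < deg i
  mul_inj : ∀ i j, Function.Injective (reedyMulMap k e (Ap : Set A) (Am : Set A) j i)
  mul_range : ∀ i j, LinearMap.range (reedyMulMap k e (Ap : Set A) (Am : Set A) j i)
      = cornerSpace k (e j) (e i) Set.univ
/-- The corner `eAe` of an algebra, as a non-unital subalgebra: the set of elements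
fixed under left and right multiplication by `e`. -/
def cornerNonUnitalSubalgebra (k : Type*) [Field k] {A : Type*} [Ring A] [Algebra k A]
    (e : A) : NonUnitalSubalgebra k A where
  carrier := {x | e * x = x ∧ x * e = x}
  add_mem' := fun ha hb => ⟨by rw [mul_add, ha.1, hb.1], by rw [add_mul, ha.2, hb.2]⟩
  zero_mem' := ⟨mul_zero e, zero_mul e⟩
  mul_mem' := fun ha hb => ⟨by rw [← mul_assoc, ha.1], by rw [mul_assoc, hb.2]⟩
  smul_mem' := fun c x hx => ⟨by rw [mul_smul_comm, hx.1], by rw [smul_mul_assoc, hx.2]⟩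

/-- The corner ring `eAe` attached to an idempotent `e` of an algebra `A`. -/
def CornerRing (k : Type*) [Field k] {A : Type*} [Ring A] [Algebra k A]
    (e : {x : A // IsIdempotentElem x}) : Type _ :=
  ↥(cornerNonUnitalSubalgebra k (e : A))

instance CornerRing.instRing (k : Type*) [Field k] {A : Type*} [Ring A] [Algebra k A]
    (e : {x : A // IsIdempotentElem x}) : Ring (CornerRing k e) :=
  { (inferInstance : NonUnitalRing (cornerNonUnitalSubalgebra k (e : A))) with
    one := ⟨(e : A), e.2, e.2⟩
    one_mul := fun x => Subtype.ext x.2.1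
    mul_one := fun x => Subtype.ext x.2.2 }

instance CornerRing.instModule (k : Type*) [Field k] {A : Type*} [Ring A] [Algebra k A]
    (e : {x : A // IsIdempotentElem x}) : Module k (CornerRing k e) :=
  inferInstanceAs (Module k ↥(cornerNonUnitalSubalgebra k (e : A)))

noncomputable instance CornerRing.instAlgebra (k : Type*) [Field k] {A : Type*} [Ring A]
    [Algebra k A] (e : {x : A // IsIdempotentElem x}) : Algebra k (CornerRing k e) :=
  Algebra.ofModule
    (fun c x y => Subtype.ext (smul_mul_assoc c x.1 y.1))
    (fun c x y => Subtype.ext (mul_smul_comm c x.1 y.1))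

/-- The element of the corner ring `eAe` underlying `x : A`, given proofs. -/
def CornerRing.mk (k : Type*) [Field k] {A : Type*} [Ring A] [Algebra k A]
    (e : {x : A // IsIdempotentElem x}) (x : A) (h1 : (e : A) * x = x) (h2 : x * (e : A) = x) :
    CornerRing k e := ⟨x, h1, h2⟩

open scoped Pointwise in
/-- `J/Jp` is a heredity ideal of `A/Jp`, expressed inside `A`: both are two-sided ideals
with `Jp ≤ J`, `J` is idempotent modulo `Jp`, `J·rad(A/Jp)·J ⊆ Jp` (the preimage of
`rad(A/Jp)` in `A` being `Ideal.jacobson Jp`), and `J/Jp` is projective over `A/Jp`, i.e.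
an `A`-module direct summand of a finite free `A/Jp`-module. -/
def IsHeredityStep (A : Type*) [Ring A] (Jp J : Ideal A) : Prop :=
  Jp ≤ J ∧
  (∀ x ∈ Jp, ∀ a : A, x * a ∈ Jp) ∧
  (∀ x ∈ J, ∀ a : A, x * a ∈ J) ∧
  Submodule.span A ((J : Set A) * (J : Set A)) ⊔ Jp = J ∧
  (∀ x ∈ J, ∀ r ∈ Ideal.jacobson Jp, ∀ y ∈ J, x * r * y ∈ Jp) ∧
  ∃ (m : ℕ) (s : (↥J ⧸ (Submodule.comap J.subtype Jp)) →ₗ[A] (Fin m → A ⧸ Jp))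
    (p : (Fin m → A ⧸ Jp) →ₗ[A] (↥J ⧸ (Submodule.comap J.subtype Jp))),
    p.comp s = LinearMap.id



section JacAux
variable {A : Type*} [Ring A]

lemma aux_span_mul_right {S : Set A} (hS : ∀ x ∈ S, ∀ a : A, x * a ∈ Submodule.span A S) :
    ∀ x ∈ Submodule.span A S, ∀ a : A, x * a ∈ Submodule.span A S := by
  intro x hx a
  induction hx using Submodule.span_induction with
  | mem y hy => exact hS y hy a
  | zero => simp
  | add y z _ _ hy hz => rw [add_mul]; exact add_mem hy hz
  | smul c y _ hy =>
      rw [smul_eq_mul, mul_assoc]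
      exact Submodule.smul_mem _ c hy

lemma aux_mem_jac_of {Jp : Ideal A} {x : A}
    (h : ∀ y : A, ∃ z : A, z * (1 - y * x) - 1 ∈ Jp) : x ∈ Jp.jacobson := by
  rw [Ideal.jacobson]
  refine Submodule.mem_sInf.2 ?_
  rintro M ⟨hle, hM⟩
  by_contra hxM
  have htop : M ⊔ Submodule.span A {x} = ⊤ :=
    hM.1.2 _ (lt_of_le_of_ne le_sup_left
      (fun he => hxM (he ▸ Submodule.mem_sup_right (Submodule.mem_span_singleton_self x))))
  have h1 : (1 : A) ∈ M ⊔ Submodule.span A {x} := htop ▸ Submodule.mem_top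
  rcases Submodule.mem_sup.mp h1 with ⟨p, hp, q, hq, hpq⟩
  rcases Submodule.mem_span_singleton.mp hq with ⟨y, rfl⟩
  rcases h y with ⟨z, hz⟩
  have hyx : 1 - y * x = p := by
    rw [smul_eq_mul] at hpq
    rw [← hpq]; noncomm_ring
  rw [hyx] at hz
  have hzM : z * p ∈ M := by
    simpa [smul_eq_mul] using M.smul_mem z hp
  have h1M : (1 : A) ∈ M := by
    have := M.sub_mem hzM (hle hz)
    simpa using this
  exact hM.1.1 ((Ideal.eq_top_iff_one M).2 h1M)

lemma aux_jac_quasi_inv {Jp : Ideal A} {x : A} (hx : x ∈ Jp.jacobson) (y : A) :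
    ∃ z : A, z * (1 - y * x) - 1 ∈ Jp := by
  by_cases hL : Jp ⊔ Submodule.span A {1 - y * x} = ⊤
  · have h1 : (1 : A) ∈ Jp ⊔ Submodule.span A {1 - y * x} := hL ▸ Submodule.mem_top
    rcases Submodule.mem_sup.mp h1 with ⟨p, hp, q, hq, hpq⟩
    rcases Submodule.mem_span_singleton.mp hq with ⟨z, rfl⟩
    refine ⟨z, ?_⟩
    rw [smul_eq_mul] at hpq
    have h2 : z * (1 - y * x) = 1 - p := eq_sub_of_add_eq (by rw [add_comm, hpq])
    rw [h2]
    have : 1 - p - 1 = -p := by noncomm_ring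
    rw [this]; exact Jp.neg_mem hp
  · exfalso
    obtain ⟨M, hM, hle⟩ := Ideal.exists_le_maximal _ hL
    have hJpM : Jp ≤ M := le_trans le_sup_left hle
    have hxM : x ∈ M := by
      rw [Ideal.jacobson] at hx
      exact Submodule.mem_sInf.1 hx M ⟨hJpM, hM⟩
    have h1yx : (1 : A) - y * x ∈ M :=
      hle (Submodule.mem_sup_right (Submodule.mem_span_singleton_self _))
    have hyx : y * x ∈ M := by simpa [smul_eq_mul] using M.smul_mem y hxM
    have : (1 : A) ∈ M := by
      have := M.add_mem h1yx hyx
      simpa using this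
    exact hM.1.1 ((Ideal.eq_top_iff_one M).2 this)

lemma aux_jac_mul_right {Jp : Ideal A} (hJp : ∀ p ∈ Jp, ∀ a : A, p * a ∈ Jp)
    {x : A} (hx : x ∈ Jp.jacobson) (a : A) : x * a ∈ Jp.jacobson := by
  apply aux_mem_jac_of
  intro y
  -- u := x * (a * y) ∈ jacobson (left ideal); find quasi inverse for 1 - y * (x*a)
  -- standard: if v (1 - (a*y) x) ≡ 1 then (1 + y x... )
  -- we show: ∃ z, z * (1 - y * (x * a)) - 1 ∈ Jp
  -- use quasi-inverse for x with y' := a * y : v * (1 - a * y * x) - 1 ∈ Jp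
  obtain ⟨v, hv⟩ := aux_jac_quasi_inv hx (a * y)
  -- claim z := 1 + y * x * v * a works:
  refine ⟨1 + y * x * v * a, ?_⟩
  have key : (1 + y * x * v * a) * (1 - y * (x * a)) - 1
      = y * x * (v * (1 - a * y * x) - 1) * a := by noncomm_ring
  rw [key]
  exact hJp _ (Jp.smul_mem (y * x) hv) a

lemma aux_jac_idem {Jp : Ideal A} (hJp : ∀ p ∈ Jp, ∀ a : A, p * a ∈ Jp)
    {g : A} (hg : g * g = g) (hgj : g ∈ Jp.jacobson) : g ∈ Jp := by
  obtain ⟨z, hz⟩ := aux_jac_quasi_inv hgj 1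
  have : (z * (1 - 1 * g) - 1) * g ∈ Jp := hJp _ hz g
  have h2 : (z * (1 - 1 * g) - 1) * g = -g := by
    have e1 : (z * (1 - 1 * g) - 1) * g = z * (g - g * g) - g := by noncomm_ring
    rw [e1, hg]; simp
  rw [h2] at this
  simpa using Jp.neg_mem this

end JacAux



lemma aux_greedy {A M Q : Type*} [Ring A] [AddCommGroup M] [Module A M]
    [AddCommGroup Q] [Module A Q]
    (hQ : ∀ V : Submodule A Q, V = ⊥ ∨ V = ⊤) :
    ∀ (d : ℕ) (f : Fin d → (Q →ₗ[A] M)),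
      ∃ (c : ℕ) (Φ : (Fin c → Q) →ₗ[A] M), Function.Injective Φ ∧
        LinearMap.range Φ = ⨆ q, LinearMap.range (f q) := by
  intro d
  induction d with
  | zero =>
      intro f
      refine ⟨0, 0, ?_, ?_⟩
      · intro x y _; funext i; exact absurd i.2 (by omega)
      · rw [LinearMap.range_zero]
        symm; rw [eq_bot_iff]
        exact iSup_le fun q => absurd q.2 (by omega)
  | succ d ih =>
      intro f
      obtain ⟨c, Φ, hΦinj, hΦrange⟩ := ih (fun q => f q.castSucc)
      have hsplit : (⨆ q : Fin (d+1), LinearMap.range (f q))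
          = (⨆ q : Fin d, LinearMap.range (f q.castSucc)) ⊔ LinearMap.range (f (Fin.last d)) := by
        apply le_antisymm
        · apply iSup_le
          intro q
          induction q using Fin.lastCases with
          | last => exact le_sup_right
          | cast i =>
              exact le_trans (le_iSup (fun q : Fin d => LinearMap.range (f q.castSucc)) i)
                le_sup_left
        · refine sup_le (iSup_le fun q => le_iSup (fun q : Fin (d+1) => LinearMap.range (f q)) q.castSucc)
            (le_iSup (fun q : Fin (d+1) => LinearMap.range (f q)) (Fin.last d))
      set g := f (Fin.last d) with hg
      by_cases hr : LinearMap.range g ≤ LinearMap.range Φ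
      · refine ⟨c, Φ, hΦinj, ?_⟩
        rw [hsplit, ← hΦrange, sup_eq_left.2 (hΦrange ▸ hr)]
      · -- g injective and range g disjoint from range Φ
        have hker : LinearMap.ker g = ⊥ := by
          rcases hQ (LinearMap.ker g) with h | h
          · exact h
          · exfalso; apply hr
            rw [LinearMap.range_eq_bot.2 (LinearMap.ker_eq_top.1 h)]
            exact bot_le
        have hcomap : Submodule.comap g (LinearMap.range Φ) = ⊥ := by
          rcases hQ (Submodule.comap g (LinearMap.range Φ)) with h | h
          · exact h
          · exfalso; apply hr
            rintro _ ⟨v, rfl⟩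
            have : v ∈ Submodule.comap g (LinearMap.range Φ) := h ▸ Submodule.mem_top
            exact this
        have hdisj : ∀ x, x ∈ LinearMap.range g → x ∈ LinearMap.range Φ → x = 0 := by
          rintro _ ⟨v, rfl⟩ hx
          have : v ∈ Submodule.comap g (LinearMap.range Φ) := hx
          rw [hcomap] at this
          simp only [Submodule.mem_bot] at this
          rw [this, map_zero]
        refine ⟨c + 1,
          Φ.comp (LinearMap.funLeft A Q Fin.castSucc) + g.comp (LinearMap.proj (Fin.last c)), ?_, ?_⟩
        · rw [injective_iff_map_eq_zero]
          intro x hx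
          simp only [LinearMap.add_apply, LinearMap.comp_apply, LinearMap.funLeft_apply,
            LinearMap.proj_apply] at hx
          have h1 : Φ (fun i : Fin c => x i.castSucc) = - g (x (Fin.last c)) := by
            rw [eq_neg_iff_add_eq_zero]; exact hx
          have h2 : Φ (fun i : Fin c => x i.castSucc) = 0 := by
            apply hdisj
            · rw [h1]; exact Submodule.neg_mem _ ⟨x (Fin.last c), rfl⟩
            · exact ⟨_, rfl⟩
          have h3 : g (x (Fin.last c)) = 0 := by
            rw [h2] at h1; rw [← neg_eq_zero, ← h1]
          have h4 : (fun i : Fin c => x i.castSucc) = 0 := hΦinj (by rw [h2]; exact (map_zero Φ).symm)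
          have h5 : x (Fin.last c) = 0 := by
            have := LinearMap.ker_eq_bot.1 hker
            exact this (by rw [h3, map_zero])
          funext i
          induction i using Fin.lastCases with
          | last => exact h5
          | cast j => exact congrFun h4 j
        · rw [hsplit, ← hΦrange]
          apply le_antisymm
          · rintro _ ⟨x, rfl⟩
            simp only [LinearMap.add_apply, LinearMap.comp_apply]
            exact Submodule.add_mem _ (Submodule.mem_sup_left ⟨_, rfl⟩)
              (Submodule.mem_sup_right ⟨_, rfl⟩)
          · apply sup_le
            · rintro _ ⟨x, rfl⟩
              refine ⟨Fin.snoc x 0, ?_⟩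
              simp only [LinearMap.add_apply, LinearMap.comp_apply, LinearMap.funLeft_apply,
                LinearMap.proj_apply, Fin.snoc_last, map_zero, add_zero]
              congr 1
              funext i
              simp [LinearMap.funLeft_apply, Fin.snoc_castSucc]
            · rintro _ ⟨v, rfl⟩
              refine ⟨(Fin.snoc (0 : Fin c → Q) v : Fin (c+1) → Q), ?_⟩
              simp only [LinearMap.add_apply, LinearMap.comp_apply, LinearMap.funLeft_apply,
                LinearMap.proj_apply, Fin.snoc_last]
              have h6 : (LinearMap.funLeft A Q Fin.castSucc)
                  (Fin.snoc (0 : Fin c → Q) v : Fin (c+1) → Q) = (0 : Fin c → Q) := by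
                funext i
                simp [LinearMap.funLeft_apply, Fin.snoc_castSucc]
              rw [h6, map_zero, zero_add]



open scoped DirectSum

section Phi

variable {m : ℕ} (A : Type*) [Ring A] (P : Fin m → Type*)
  [∀ i, AddCommGroup (P i)] [∀ i, Module A (P i)] (μ : Fin m → ℕ)

def cIncl (t : Σ i : Fin m, Fin (μ i)) : P t.1 →ₗ[A] ⨁ i, (Fin (μ i) → P i) :=
  (DirectSum.lof A (Fin m) (fun i => Fin (μ i) → P i) t.1).comp
    (LinearMap.single A (fun _ : Fin (μ t.1) => P t.1) t.2)

def cProj (t : Σ i : Fin m, Fin (μ i)) : (⨁ i, (Fin (μ i) → P i)) →ₗ[A] P t.1 :=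
  (LinearMap.proj t.2).comp (DirectSum.component A (Fin m) (fun i => Fin (μ i) → P i) t.1)

variable {A P μ}

lemma cProj_cIncl_same (t : Σ i : Fin m, Fin (μ i)) (v : P t.1) :
    cProj A P μ t (cIncl A P μ t v) = v := by
  obtain ⟨i, a⟩ := t
  simp [cProj, cIncl, DirectSum.component.lof_self]

lemma cProj_cIncl_ne {s t : Σ i : Fin m, Fin (μ i)} (h : s ≠ t) (v : P t.1) :
    cProj A P μ s (cIncl A P μ t v) = 0 := by
  obtain ⟨i, a⟩ := s
  obtain ⟨j, b⟩ := t
  by_cases hij : j = i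
  · subst hij
    have hab : b ≠ a := fun hb => h (by rw [hb])
    simp [cProj, cIncl, DirectSum.component.lof_self, Pi.single_eq_of_ne' hab]
  · simp [cProj, cIncl, DirectSum.component.of, hij]

lemma sum_cIncl_cProj (x : ⨁ i, (Fin (μ i) → P i)) :
    ∑ t : Σ i : Fin m, Fin (μ i), cIncl A P μ t (cProj A P μ t x) = x := by
  rw [← Finset.univ_sigma_univ, Finset.sum_sigma]
  have h1 : ∀ i : Fin m, ∑ a : Fin (μ i), cIncl A P μ ⟨i, a⟩ (cProj A P μ ⟨i, a⟩ x)
      = DirectSum.lof A (Fin m) (fun i => Fin (μ i) → P i) i (x i) := by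
    intro i
    have : ∀ a : Fin (μ i), cIncl A P μ ⟨i, a⟩ (cProj A P μ ⟨i, a⟩ x)
        = DirectSum.lof A (Fin m) (fun i => Fin (μ i) → P i) i (Pi.single a (x i a)) := by
      intro a; rfl
    rw [Finset.sum_congr rfl (fun a _ => this a), ← map_sum]
    congr 1
    exact Finset.univ_sum_single (x i)
  rw [Finset.sum_congr rfl (fun i _ => h1 i)]
  simpa [DirectSum.lof_eq_of] using DirectSum.sum_univ_of x

end Phi

section G
variable {m : ℕ} {A : Type*} [Ring A] {P : Fin m → Type*}
  [∀ i, AddCommGroup (P i)] [∀ i, Module A (P i)] {μ : Fin m → ℕ}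
variable (φ : A ≃ₗ[A] ⨁ i, (Fin (μ i) → P i))

def gEl (t : Σ i : Fin m, Fin (μ i)) : A :=
  φ.symm (cIncl A P μ t (cProj A P μ t (φ 1)))

def uEl {i : Fin m} (a b : Fin (μ i)) : A :=
  φ.symm (cIncl A P μ ⟨i, b⟩ (cProj A P μ ⟨i, a⟩ (φ 1)))

lemma mul_symm (x : A) (v : ⨁ i, (Fin (μ i) → P i)) :
    x * φ.symm v = φ.symm (x • v) := by
  rw [← smul_eq_mul, ← map_smul]

lemma mul_gEl (x : A) (t : Σ i : Fin m, Fin (μ i)) :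
    x * gEl φ t = φ.symm (cIncl A P μ t (cProj A P μ t (φ x))) := by
  rw [gEl, mul_symm, ← map_smul, ← map_smul, ← map_smul, smul_eq_mul, mul_one]

lemma mul_uEl (x : A) {i : Fin m} (a b : Fin (μ i)) :
    x * uEl φ a b = φ.symm (cIncl A P μ ⟨i, b⟩ (cProj A P μ ⟨i, a⟩ (φ x))) := by
  rw [uEl, mul_symm, ← map_smul, ← map_smul, ← map_smul, smul_eq_mul, mul_one]

lemma gEl_mul_gEl (s t : Σ i : Fin m, Fin (μ i)) :
    gEl φ s * gEl φ t = if s = t then gEl φ t else 0 := by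
  rw [mul_gEl]
  by_cases h : s = t
  · subst h
    rw [if_pos rfl, gEl, LinearEquiv.apply_symm_apply, cProj_cIncl_same]
  · rw [if_neg h, gEl, LinearEquiv.apply_symm_apply, cProj_cIncl_ne (Ne.symm h)]
    simp

lemma gEl_idem (t : Σ i : Fin m, Fin (μ i)) : gEl φ t * gEl φ t = gEl φ t := by
  rw [gEl_mul_gEl, if_pos rfl]

lemma gEl_sum : ∑ t : Σ i : Fin m, Fin (μ i), gEl φ t = 1 := by
  simp only [gEl]
  rw [← map_sum, sum_cIncl_cProj]
  exact φ.symm_apply_apply 1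

def homOf (y : A) (t s : Σ i : Fin m, Fin (μ i)) : P t.1 →ₗ[A] P s.1 :=
  (cProj A P μ s).comp ((φ.toLinearMap).comp ((LinearMap.toSpanSingleton A A y).comp
    ((φ.symm.toLinearMap).comp (cIncl A P μ t))))

lemma homOf_eval (y : A) (t s : Σ i : Fin m, Fin (μ i)) :
    homOf φ y t s (cProj A P μ t (φ 1)) = cProj A P μ s (φ (gEl φ t * y)) := by
  simp only [homOf, LinearMap.comp_apply, LinearEquiv.coe_coe,
    LinearMap.toSpanSingleton_apply, smul_eq_mul]
  rfl

lemma key_zero (t s : Σ i : Fin m, Fin (μ i))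
    (hzero : ∀ f : P t.1 →ₗ[A] P s.1, f = 0) (x : A) :
    gEl φ t * x * gEl φ s = 0 := by
  set y := gEl φ t * x * gEl φ s with hy
  have h1 : gEl φ t * y = y := by
    rw [hy, ← mul_assoc, ← mul_assoc, gEl_idem]
  have h2 : y * gEl φ s = y := by
    rw [hy, mul_assoc, gEl_idem]
  have h3 : φ y = cIncl A P μ s (cProj A P μ s (φ y)) := by
    conv_lhs => rw [← h2, mul_gEl, LinearEquiv.apply_symm_apply]
  have h4 : cProj A P μ s (φ y) = 0 := by
    rw [← h1, ← homOf_eval, hzero (homOf φ y t s), LinearMap.zero_apply]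
  rw [h4, map_zero] at h3
  exact φ.map_eq_zero_iff.1 h3

end G

section GK
variable {k : Type*} [Field k] {m : ℕ} {A : Type*} [Ring A] [Algebra k A]
  {P : Fin m → Type*}
  [∀ i, AddCommGroup (P i)] [∀ i, Module A (P i)] [∀ i, Module k (P i)]
  [∀ i, IsScalarTower k A (P i)] [∀ i, SMulCommClass A k (P i)] {μ : Fin m → ℕ}
variable (φ : A ≃ₗ[A] ⨁ i, (Fin (μ i) → P i))

lemma uEl_mul_gEl {i : Fin m} (a b : Fin (μ i)) :
    uEl φ a b * gEl φ ⟨i, b⟩ = uEl φ a b := by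
  rw [mul_gEl, uEl, LinearEquiv.apply_symm_apply, cProj_cIncl_same]

lemma uEl_mul_uEl {i : Fin m} (a b : Fin (μ i)) :
    uEl φ b a * uEl φ a b = gEl φ ⟨i, b⟩ := by
  rw [mul_uEl, uEl, LinearEquiv.apply_symm_apply, cProj_cIncl_same, gEl]

lemma key_scalar {i : Fin m} (a b : Fin (μ i))
    (hE : ∀ f : P i →ₗ[A] P i, ∃ c : k, f = c • LinearMap.id) (x : A) :
    ∃ c : k, gEl φ ⟨i, a⟩ * x * gEl φ ⟨i, b⟩ = c • uEl φ a b := by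
  set t : Σ j : Fin m, Fin (μ j) := ⟨i, a⟩
  set s : Σ j : Fin m, Fin (μ j) := ⟨i, b⟩
  set y := gEl φ t * x * gEl φ s with hy
  have h1 : gEl φ t * y = y := by
    rw [hy, ← mul_assoc, ← mul_assoc, gEl_idem]
  have h2 : y * gEl φ s = y := by
    rw [hy, mul_assoc, gEl_idem]
  have h3 : φ y = cIncl A P μ s (cProj A P μ s (φ y)) := by
    conv_lhs => rw [← h2, mul_gEl, LinearEquiv.apply_symm_apply]
  obtain ⟨c, hc⟩ := hE (homOf φ y t s)
  refine ⟨c, ?_⟩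
  have h4 : cProj A P μ s (φ y) = c • cProj A P μ t (φ 1) := by
    rw [← h1, ← homOf_eval, hc]
    simp
  have h5 : φ y = c • cIncl A P μ s (cProj A P μ t (φ 1)) := by
    rw [h3, h4, ← algebraMap_smul A c (cProj A P μ t (φ 1)), map_smul,
      algebraMap_smul]
  have h6 : y = c • uEl φ a b := by
    have := congrArg (φ.symm) h5
    rw [LinearEquiv.symm_apply_apply] at this
    rw [this, ← algebraMap_smul A c (cIncl A P μ s (cProj A P μ t (φ 1))), map_smul,
      algebraMap_smul, uEl]
  exact h6
end GK


/-- A finite-dimensional algebra whose indecomposable projectives have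
scalar endomorphism rings and are directed by a partial order (`Hom(P j, P i) ≠ 0` only if
`i ⊴ j`) is quasi-hereditary: it admits a chain of two-sided ideals
`0 = J₋₁ ⊆ J₀ ⊆ ⋯ ⊆ Jₙ = A` with each `Jₗ/J_{l-1}` a heredity ideal of `A/J_{l-1}`. -/
theorem directed_is_quasi_hereditary
    (k : Type*) [Field k] (A : Type*) [Ring A] [Algebra k A] [FiniteDimensional k A]
    {m : ℕ} (P : Fin m → Type*) [∀ i, AddCommGroup (P i)] [∀ i, Module A (P i)]
    [∀ i, Module k (P i)] [∀ i, IsScalarTower k A (P i)] [∀ i, SMulCommClass A k (P i)]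
    (hproj : ∀ i, Module.Projective A (P i))
    (hcomplete : ∃ μ : Fin m → ℕ, Nonempty (A ≃ₗ[A] ⨁ i, (Fin (μ i) → P i)))
    (hirred : ∀ i j, i ≠ j → IsEmpty (P i ≃ₗ[A] P j))
    (hEnd : ∀ i (f : P i →ₗ[A] P i), ∃ c : k, f = c • LinearMap.id)
    (r : Fin m → Fin m → Prop) (hr : IsPartialOrder (Fin m) r)
    (hHom : ∀ i j, (∃ f : P j →ₗ[A] P i, f ≠ 0) → r i j) :
    ∃ (n : ℕ) (J : ℕ → Ideal A), J 0 = ⊥ ∧ J n = ⊤ ∧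
      ∀ l < n, IsHeredityStep A (J l) (J (l + 1)) := by
  classical
  obtain ⟨μ, ⟨φ⟩⟩ := hcomplete
  -- order data
  have hrefl : ∀ a, r a a := hr.toIsPreorder.toRefl.refl
  have htrans : ∀ a b c, r a b → r b c → r a c := fun a b c => hr.toIsPreorder.toIsTrans.trans a b c
  have hanti : ∀ a b, r a b → r b a → a = b := fun a b => hr.toAntisymm.antisymm a b
  set dg : Fin m → ℕ := fun i => Set.ncard {j | r i j} with hdg_def
  have hdg : ∀ i j, r i j → i ≠ j → dg j < dg i := by
    intro i j hij hne
    apply Set.ncard_lt_ncard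
    · constructor
      · intro x hx; exact htrans i j x hij hx
      · intro hsub
        have : r j i := hsub (hrefl i)
        exact hne (hanti i j hij this)
    · exact Set.toFinite _
  set Mb : ℕ := Finset.univ.sup μ with hMb_def
  set K : Fin m → ℕ := fun i => dg i * m + i.val with hK_def
  have hKr : ∀ i j, r i j → i ≠ j → K j < K i := by
    intro i j hij hne
    have h1 : dg j + 1 ≤ dg i := hdg i j hij hne
    have h2 : (dg j + 1) * m ≤ dg i * m := Nat.mul_le_mul_right m h1
    rw [add_mul, one_mul] at h2
    have h3 : j.val < m := j.2
    have h4 : i.val < m := i.2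
    simp only [hK_def]
    omega
  have hKinj : ∀ i j, K i = K j → i = j := by
    intro i j hK
    have h3 : j.val < m := j.2
    have h4 : i.val < m := i.2
    simp only [hK_def] at hK
    have hdgeq : dg i = dg j := by
      rcases Nat.lt_trichotomy (dg i) (dg j) with h | h | h
      · have h2 : (dg i + 1) * m ≤ dg j * m := Nat.mul_le_mul_right m h
        rw [add_mul, one_mul] at h2; omega
      · exact h
      · have h2 : (dg j + 1) * m ≤ dg i * m := Nat.mul_le_mul_right m h
        rw [add_mul, one_mul] at h2; omega
    rw [hdgeq] at hK
    exact Fin.ext (by omega)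
  set key : (Σ i : Fin m, Fin (μ i)) → ℕ := fun t => K t.1 * (Mb + 1) + t.2.val
    with hkey_def
  have hvalMb : ∀ t : Σ i : Fin m, Fin (μ i), t.2.val < Mb + 1 := by
    intro t
    have h1 : μ t.1 ≤ Mb := Finset.le_sup (Finset.mem_univ t.1)
    have := t.2.2
    omega
  have hkey_lt : ∀ t t' : Σ i : Fin m, Fin (μ i), K t.1 < K t'.1 → key t < key t' := by
    intro t t' h
    have h2 : (K t.1 + 1) * (Mb + 1) ≤ K t'.1 * (Mb + 1) := Nat.mul_le_mul_right _ h
    rw [add_mul, one_mul] at h2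
    have := hvalMb t
    simp only [hkey_def]
    omega
  have hkey_inj : ∀ t t' : Σ i : Fin m, Fin (μ i), key t = key t' → t = t' := by
    intro t t' h
    have hKeq : K t.1 = K t'.1 := by
      rcases Nat.lt_trichotomy (K t.1) (K t'.1) with hlt | he | hlt
      · exact absurd h (Nat.ne_of_lt (hkey_lt t t' hlt))
      · exact he
      · exact absurd h.symm (Nat.ne_of_lt (hkey_lt t' t hlt))
    have h1 : t.1 = t'.1 := hKinj _ _ hKeq
    obtain ⟨i, a⟩ := t
    obtain ⟨i', a'⟩ := t'
    simp only at h1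
    subst h1
    simp only [hkey_def] at h
    rw [hKeq] at h
    have : a.val = a'.val := by omega
    rw [show a = a' from Fin.ext this]
  -- the chain
  set n : ℕ := (Finset.univ.sup key) + 1 with hn_def
  set J : ℕ → Ideal A := fun l =>
    Submodule.span A {x | ∃ t : Σ i : Fin m, Fin (μ i), ∃ b : A, key t < l ∧ x = gEl φ t * b}
    with hJ_def
  have hJmulr : ∀ l, ∀ x ∈ J l, ∀ a : A, x * a ∈ J l := by
    intro l
    apply aux_span_mul_right
    rintro x ⟨t, b, hkt, rfl⟩ a
    exact Submodule.subset_span ⟨t, b * a, hkt, mul_assoc _ _ _⟩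
  have hJ0 : J 0 = ⊥ := by
    rw [hJ_def]
    rw [Submodule.span_eq_bot]
    rintro x ⟨t, b, hkt, rfl⟩
    omega
  have hJn : J n = ⊤ := by
    rw [Ideal.eq_top_iff_one]
    have h1 : (1 : A) = ∑ t : Σ i : Fin m, Fin (μ i), gEl φ t := (gEl_sum φ).symm
    rw [h1]
    apply Submodule.sum_mem
    intro t _
    apply Submodule.subset_span
    refine ⟨t, 1, ?_, (mul_one _).symm⟩
    have : key t ≤ Finset.univ.sup key := Finset.le_sup (Finset.mem_univ t)
    omega
  refine ⟨n, J, hJ0, hJn, ?_⟩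
  intro l _
  have hJle : J l ≤ J (l + 1) := by
    apply Submodule.span_mono
    rintro x ⟨t, b, hkt, rfl⟩
    exact ⟨t, b, by omega, rfl⟩
  by_cases hex : ∃ t₀ : Σ i : Fin m, Fin (μ i), key t₀ = l
  case neg =>
    have heq : J (l + 1) = J l := by
      simp only [hJ_def]
      congr 1
      ext x
      constructor
      · rintro ⟨t, b, hkt, rfl⟩
        refine ⟨t, b, ?_, rfl⟩
        rcases Nat.lt_succ_iff_lt_or_eq.1 hkt with h | h
        · exact h
        · exact absurd ⟨t, h⟩ hex
      · rintro ⟨t, b, hkt, rfl⟩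
        exact ⟨t, b, by omega, rfl⟩
    rw [heq]
    refine ⟨le_refl _, hJmulr l, hJmulr l, ?_, ?_, ?_⟩
    · apply le_antisymm
      · apply sup_le _ (le_refl _)
        rw [Submodule.span_le]
        rintro x ⟨u, hu, v, hv, rfl⟩
        exact hJmulr l u hu v
      · exact le_sup_right
    · intro x hx rr _ y hy
      exact hJmulr l _ (hJmulr l x hx rr) y
    · have htop : Submodule.comap (J l).subtype (J l) = ⊤ := by
        rw [eq_top_iff]
        intro x _
        exact x.2
      haveI : Subsingleton (↥(J l) ⧸ Submodule.comap (J l).subtype (J l)) :=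
        Submodule.Quotient.subsingleton_iff.2 htop
      exact ⟨0, 0, 0, LinearMap.ext fun x => Subsingleton.elim _ _⟩
  case pos =>
  obtain ⟨⟨i₀, a₀⟩, ht₀⟩ := hex
  set t₀ : Σ i : Fin m, Fin (μ i) := ⟨i₀, a₀⟩ with ht₀_def
  set gg : A := gEl φ t₀ with hgg_def
  have hidem : gg * gg = gg := gEl_idem φ t₀
  have hgen1 : ∀ t : Σ i : Fin m, Fin (μ i), key t < l + 1 → key t < l ∨ t = t₀ := by
    intro t hkt
    rcases Nat.lt_succ_iff_lt_or_eq.1 hkt with h | h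
    · exact Or.inl h
    · exact Or.inr (hkey_inj t t₀ (by omega))
  have hggJ : gg ∈ J (l + 1) := Submodule.subset_span ⟨t₀, 1, by omega, (mul_one _).symm⟩
  have hgtJp : ∀ t : Σ i : Fin m, Fin (μ i), key t < l → gEl φ t ∈ J l := fun t h =>
    Submodule.subset_span ⟨t, 1, h, (mul_one _).symm⟩
  have hjac_mul : ∀ x ∈ (J l).jacobson, ∀ a : A, x * a ∈ (J l).jacobson :=
    fun x hx a => aux_jac_mul_right (hJmulr l) hx a
  -- key inner lemma for the radical condition
  have hR : ∀ y ∈ J (l + 1), ∀ c ∈ (J l).jacobson, gg * c * y ∈ J l := by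
    intro y hy
    induction hy using Submodule.span_induction with
    | mem y hym =>
        obtain ⟨t, b, hkt, rfl⟩ := hym
        intro c hc
        rcases hgen1 t hkt with h | h
        · have h1 : gEl φ t * b ∈ J l := Submodule.subset_span ⟨t, b, h, rfl⟩
          have h2 : c * (gEl φ t * b) ∈ J l := by
            simpa [smul_eq_mul] using Submodule.smul_mem _ c h1
          have h3 : gg * (c * (gEl φ t * b)) ∈ J l := by
            simpa [smul_eq_mul] using Submodule.smul_mem _ gg h2
          rw [mul_assoc]
          exact h3
        · subst h
          obtain ⟨cc, hcc⟩ := key_scalar φ a₀ a₀ (hEnd i₀) c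
          have hcc' : gg * c * gg = cc • gg := hcc
          by_cases hcc0 : cc = 0
          · rw [show gg * c * (gEl φ t₀ * b) = (gg * c * gg) * b by
              rw [hgg_def, mul_assoc, mul_assoc, mul_assoc]]
            rw [hcc', hcc0, zero_smul, zero_mul]
            exact zero_mem _
          · have hjac : gg * c * gg ∈ (J l).jacobson := by
              apply hjac_mul
              simpa [smul_eq_mul] using Submodule.smul_mem ((J l).jacobson) gg hc
            have hggjac : gg ∈ (J l).jacobson := by
              have he : gg = (cc⁻¹ • (1 : A)) * (cc • gg) := by
                rw [smul_mul_assoc, one_mul, smul_smul, inv_mul_cancel₀ hcc0, one_smul]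
              rw [he, ← smul_eq_mul]
              exact Submodule.smul_mem _ _ (hcc' ▸ hjac)
            have hggJp : gg ∈ J l := aux_jac_idem (hJmulr l) hidem hggjac
            rw [mul_assoc]
            exact hJmulr l gg hggJp _
    | zero => intro c hc; rw [mul_zero]; exact zero_mem _
    | add y z _ _ ihy ihz =>
        intro c hc
        rw [mul_add]
        exact add_mem (ihy c hc) (ihz c hc)
    | smul a y _ ihy =>
        intro c hc
        rw [smul_eq_mul, show gg * c * (a * y) = gg * (c * a) * y by
          rw [mul_assoc, mul_assoc, mul_assoc]]
        exact ihy (c * a) (hjac_mul c hc a)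
  refine ⟨hJle, hJmulr l, hJmulr (l + 1), ?_, ?_, ?_⟩
  · -- idempotency
    apply le_antisymm
    · apply sup_le _ hJle
      rw [Submodule.span_le]
      rintro x ⟨u, hu, v, hv, rfl⟩
      exact hJmulr (l + 1) u hu v
    · rw [hJ_def, Submodule.span_le]
      rintro x ⟨t, b, hkt, rfl⟩
      rcases hgen1 t hkt with h | h
      · exact Submodule.mem_sup_right (Submodule.subset_span ⟨t, b, h, rfl⟩)
      · subst h
        apply Submodule.mem_sup_left
        apply Submodule.subset_span
        have hrw : gEl φ t₀ * b = gg * (gg * b) := by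
          rw [hgg_def, ← mul_assoc, hidem]
        rw [hrw]
        exact Set.mul_mem_mul hggJ (Submodule.subset_span ⟨t₀, b, by omega, rfl⟩)
  · -- radical condition
    intro x hx
    induction hx using Submodule.span_induction with
    | mem x hxm =>
        obtain ⟨t, b, hkt, rfl⟩ := hxm
        intro rr hrr y hy
        rcases hgen1 t hkt with h | h
        · have h1 : gEl φ t * b ∈ J l := Submodule.subset_span ⟨t, b, h, rfl⟩
          exact hJmulr l _ (hJmulr l _ h1 rr) y
        · subst h
          rw [show gEl φ t₀ * b * rr * y = gg * (b * rr) * y by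
            rw [hgg_def, mul_assoc, mul_assoc, mul_assoc, mul_assoc]]
          apply hR y hy
          simpa [smul_eq_mul] using Submodule.smul_mem ((J l).jacobson) b hrr
    | zero => intro rr _ y _; rw [zero_mul, zero_mul]; exact zero_mem _
    | add x z _ _ ihx ihz =>
        intro rr hrr y hy
        rw [add_mul, add_mul]
        exact add_mem (ihx rr hrr y hy) (ihz rr hrr y hy)
    | smul a x _ ihx =>
        intro rr hrr y hy
        rw [smul_eq_mul, show a * x * rr * y = a * (x * rr * y) by
          rw [mul_assoc, mul_assoc, mul_assoc]]
        have := ihx rr hrr y hy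
        simpa [smul_eq_mul] using Submodule.smul_mem (J l) a this
  · -- projectivity
    have hstab : ∀ y : A, J l ≤ LinearMap.ker (((J l).mkQ).comp (LinearMap.toSpanSingleton A A y)) := by
      intro y p hp
      simp only [LinearMap.mem_ker, LinearMap.comp_apply, LinearMap.toSpanSingleton_apply,
        smul_eq_mul, Submodule.mkQ_apply, Submodule.Quotient.mk_eq_zero]
      exact hJmulr l p hp y
    set rmul : A → (A ⧸ J l) →ₗ[A] (A ⧸ J l) := fun y => Submodule.liftQ (J l)
      (((J l).mkQ).comp (LinearMap.toSpanSingleton A A y)) (hstab y) with hrmul_def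
    have hrmul : ∀ y x : A, rmul y ((J l).mkQ x) = (J l).mkQ (x * y) := by
      intro y x
      simp only [hrmul_def, Submodule.mkQ_apply, Submodule.liftQ_apply, LinearMap.comp_apply,
        LinearMap.toSpanSingleton_apply, smul_eq_mul]
    set P₀ : Submodule A (A ⧸ J l) := Submodule.map (J l).mkQ (Submodule.span A {gg})
      with hP₀_def
    have hP₀mem : ∀ x : A ⧸ J l, rmul gg x ∈ P₀ := by
      intro x
      obtain ⟨a, rfl⟩ := Submodule.mkQ_surjective (J l) x
      rw [hrmul]
      exact ⟨a • gg, Submodule.smul_mem _ a (Submodule.mem_span_singleton_self gg),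
        by rw [smul_eq_mul]⟩
    -- vanishing of off-diagonal terms
    have hterm_zero : ∀ t : Σ i : Fin m, Fin (μ i), ¬ key t < l → t.1 ≠ i₀ →
        ∀ x : A, gEl φ t * x * gg = 0 := by
      intro t hkt hne x
      apply key_zero
      intro f
      by_contra hf
      have hfr : r i₀ t.1 := hHom i₀ t.1 ⟨f, hf⟩
      have hlt : key t < key t₀ := hkey_lt t t₀ (hKr i₀ t.1 hfr (Ne.symm hne))
      exact absurd hlt (by omega)
    -- P₀ is simple or zero
    have hsimple : ∀ v : A ⧸ J l, v ∈ P₀ → v ≠ 0 → Submodule.span A {v} = P₀ := by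
      intro v hv hvne
      obtain ⟨w, hw, rfl⟩ := hv
      obtain ⟨x, rfl⟩ := Submodule.mem_span_singleton.1 hw
      have hxg : x • gg = ∑ t : Σ i : Fin m, Fin (μ i), gEl φ t * (x * gg) := by
        rw [← Finset.sum_mul, gEl_sum φ, one_mul, smul_eq_mul]
      apply le_antisymm
      · rw [Submodule.span_le, Set.singleton_subset_iff]
        exact ⟨x • gg, Submodule.smul_mem _ x (Submodule.mem_span_singleton_self gg), rfl⟩
      · have hex2 : ∃ (a : Fin (μ i₀)) (cc : k), cc ≠ 0 ∧
            (J l).mkQ (cc • uEl φ a a₀) ∈ Submodule.span A {(J l).mkQ (x • gg)} ∧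
            gEl φ (⟨i₀, a⟩ : Σ i : Fin m, Fin (μ i)) * x * gg = cc • uEl φ a a₀ := by
          by_contra hno
          push_neg at hno
          apply hvne
          rw [show (J l).mkQ (x • gg) = (J l).mkQ (x • gg) from rfl]
          rw [hxg, map_sum]
          apply Finset.sum_eq_zero
          intro t _
          by_cases h1 : key t < l
          · rw [Submodule.mkQ_apply, Submodule.Quotient.mk_eq_zero]
            exact hJmulr l _ (hgtJp t h1) (x * gg)
          by_cases h2 : t.1 = i₀
          · obtain ⟨i, a⟩ := t
            simp only at h2
            subst h2
            obtain ⟨cc, hcc⟩ := key_scalar φ a a₀ (hEnd i) x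
            by_cases hcc0 : cc = 0
            · rw [← mul_assoc, hcc, hcc0, zero_smul, map_zero]
            · exfalso
              apply hno a cc hcc0 _ hcc
              have hmm : (J l).mkQ (cc • uEl φ a a₀) =
                  gEl φ (⟨i, a⟩ : Σ i : Fin m, Fin (μ i)) • (J l).mkQ (x • gg) := by
                rw [← map_smul, ← hcc]
                congr 1
                rw [smul_eq_mul, smul_eq_mul, ← mul_assoc]
              rw [hmm]
              exact Submodule.smul_mem _ _ (Submodule.mem_span_singleton_self _)
          · rw [← mul_assoc, hterm_zero t h1 h2 x, map_zero]
        obtain ⟨a, cc, hcc0, hmem, hcc⟩ := hex2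
        have humem : (J l).mkQ (uEl φ a a₀) ∈ Submodule.span A {(J l).mkQ (x • gg)} := by
          have h3 : uEl φ a a₀ = (cc⁻¹ • (1 : A)) * (cc • uEl φ a a₀) := by
            rw [smul_mul_assoc, one_mul, smul_smul, inv_mul_cancel₀ hcc0, one_smul]
          rw [h3, ← smul_eq_mul, map_smul]
          exact Submodule.smul_mem _ _ hmem
        have hggmem : (J l).mkQ gg ∈ Submodule.span A {(J l).mkQ (x • gg)} := by
          have h4 : gg = uEl φ a₀ a * uEl φ a a₀ := (uEl_mul_uEl φ a a₀).symm
          have h5 : (J l).mkQ gg = uEl φ a₀ a • (J l).mkQ (uEl φ a a₀) := by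
            rw [← map_smul, smul_eq_mul, ← h4]
          rw [h5]
          exact Submodule.smul_mem _ _ humem
        rintro z ⟨w2, hw2, rfl⟩
        obtain ⟨x2, rfl⟩ := Submodule.mem_span_singleton.1 hw2
        rw [map_smul]
        exact Submodule.smul_mem _ x2 hggmem
    -- submodules of P₀ are trivial
    have hQtriv : ∀ V : Submodule A ↥P₀, V = ⊥ ∨ V = ⊤ := by
      intro V
      by_cases hV : Submodule.map P₀.subtype V = ⊥
      · left
        apply Submodule.map_injective_of_injective (Submodule.injective_subtype P₀)
        rw [hV, Submodule.map_bot]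
      · right
        obtain ⟨v, hvV, hvne⟩ := Submodule.exists_mem_ne_zero_of_ne_bot hV
        have hvP : v ∈ P₀ := Submodule.map_subtype_le P₀ V hvV
        have hsp := hsimple v hvP hvne
        have hle2 : P₀ ≤ Submodule.map P₀.subtype V := by
          refine le_of_eq_of_le hsp.symm ?_
          rw [Submodule.span_le, Set.singleton_subset_iff]
          exact hvV
        have heqV : Submodule.map P₀.subtype V = P₀ :=
          le_antisymm (Submodule.map_subtype_le _ _) hle2
        apply Submodule.map_injective_of_injective (Submodule.injective_subtype P₀)
        rw [heqV, Submodule.map_subtype_top]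
    -- basis of A over k, spanning family
    set D := Module.finrank k A with hD_def
    set bas := Module.finBasis k A with hbas_def
    set f : Fin D → (↥P₀ →ₗ[A] A ⧸ J l) := fun q => (rmul (gg * bas q)).comp P₀.subtype
      with hf_def
    set hmap : ↥(J (l + 1)) →ₗ[A] A ⧸ J l := (((J l).mkQ).comp (J (l + 1)).subtype)
      with hmap_def
    have hrange1 : LinearMap.range hmap = Submodule.map (J l).mkQ (J (l + 1)) := by
      rw [hmap_def, LinearMap.range_comp, Submodule.range_subtype]
    have hrange : LinearMap.range hmap = ⨆ q, LinearMap.range (f q) := by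
      rw [hrange1]
      apply le_antisymm
      · rw [show J (l + 1) = Submodule.span A
            {x | ∃ t : Σ i : Fin m, Fin (μ i), ∃ b : A, key t < l + 1 ∧ x = gEl φ t * b} from rfl]
        rw [Submodule.map_span, Submodule.span_le]
        rintro z ⟨w, ⟨t, b, hkt, rfl⟩, rfl⟩
        simp only [SetLike.mem_coe]
        rcases hgen1 t hkt with h | h
        · have hwJ : gEl φ t * b ∈ J l := Submodule.subset_span ⟨t, b, h, rfl⟩
          have hz : ((J l).mkQ) (gEl φ t * b) = 0 :=
            (Submodule.Quotient.mk_eq_zero _).2 hwJ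
          rw [hz]
          exact zero_mem _
        · subst h
          have hb : gEl φ t₀ * b = ∑ q, ((bas.repr b) q • (1 : A)) * (gg * bas q) := by
            conv_lhs => rw [← Module.Basis.sum_repr bas b]
            rw [Finset.mul_sum]
            apply Finset.sum_congr rfl
            intro q _
            rw [smul_mul_assoc, one_mul, mul_smul_comm, hgg_def]
          rw [hb, map_sum]
          apply Submodule.sum_mem
          intro q _
          rw [← smul_eq_mul, map_smul]
          apply Submodule.smul_mem
          apply Submodule.mem_iSup_of_mem q
          refine ⟨⟨(J l).mkQ gg, ⟨gg, Submodule.mem_span_singleton_self gg, rfl⟩⟩, ?_⟩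
          simp only [hf_def, LinearMap.comp_apply, Submodule.coe_subtype]
          rw [hrmul]
          congr 1
          rw [← mul_assoc, hidem]
      · apply iSup_le
        intro q
        rintro z ⟨⟨v, hvP⟩, rfl⟩
        obtain ⟨w, hw, rfl⟩ := hvP
        obtain ⟨a, rfl⟩ := Submodule.mem_span_singleton.1 hw
        simp only [hf_def, LinearMap.comp_apply, Submodule.coe_subtype]
        rw [hrmul]
        refine ⟨a • gg * (gg * bas q), ?_, rfl⟩
        have h5 : a • gg * (gg * bas q) = a • (gg * bas q) := by
          rw [smul_mul_assoc, ← mul_assoc, hidem]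
        rw [h5]
        apply Submodule.smul_mem
        exact Submodule.subset_span ⟨t₀, bas q, by omega, by rw [hgg_def]⟩
    -- greedy decomposition
    obtain ⟨c, Φ, hΦinj, hΦr⟩ := aux_greedy hQtriv D f
    have hΦr2 : LinearMap.range Φ = LinearMap.range hmap := by rw [hΦr, hrange]
    have hker : Submodule.comap (J (l + 1)).subtype (J l) = LinearMap.ker hmap := by
      rw [hmap_def, LinearMap.ker_comp, Submodule.ker_mkQ]
    set θ : (↥(J (l + 1)) ⧸ Submodule.comap (J (l + 1)).subtype (J l)) ≃ₗ[A]
        ↥(LinearMap.range hmap) :=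
      (Submodule.quotEquivOfEq _ _ hker).trans hmap.quotKerEquivRange with hθ_def
    set Φ' : (Fin c → ↥P₀) →ₗ[A] ↥(LinearMap.range hmap) :=
      Φ.codRestrict (LinearMap.range hmap) (fun x => hΦr2 ▸ LinearMap.mem_range_self Φ x)
      with hΦ'_def
    have hΦ'bij : Function.Bijective Φ' := by
      constructor
      · intro x y hxy
        apply hΦinj
        have := congrArg Subtype.val hxy
        simpa [hΦ'_def] using this
      · rintro ⟨z, hz⟩
        rw [← hΦr2] at hz
        obtain ⟨x, hx⟩ := hz
        exact ⟨x, Subtype.ext hx⟩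
    set Ψ := LinearEquiv.ofBijective Φ' hΦ'bij with hΨ_def
    set π : (A ⧸ J l) →ₗ[A] ↥P₀ := (rmul gg).codRestrict P₀ hP₀mem with hπ_def
    have hπ : ∀ v : ↥P₀, π v.1 = v := by
      rintro ⟨v, hvP⟩
      obtain ⟨w, hw, rfl⟩ := hvP
      obtain ⟨a, rfl⟩ := Submodule.mem_span_singleton.1 hw
      apply Subtype.ext
      simp only [hπ_def, LinearMap.codRestrict_apply]
      rw [hrmul]
      congr 1
      rw [smul_eq_mul, mul_assoc, hidem]
    refine ⟨c,
      (LinearMap.pi fun q => P₀.subtype.comp (LinearMap.proj q)).comp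
        ((Ψ.symm.toLinearMap).comp θ.toLinearMap),
      (θ.symm.toLinearMap).comp ((Ψ.toLinearMap).comp
        (LinearMap.pi fun q => π.comp (LinearMap.proj q))), ?_⟩
    apply LinearMap.ext
    intro x
    simp only [LinearMap.comp_apply, LinearMap.id_apply, LinearEquiv.coe_coe]
    have h7 : (LinearMap.pi fun q => π.comp (LinearMap.proj q))
        ((LinearMap.pi fun q => P₀.subtype.comp (LinearMap.proj q)) (Ψ.symm (θ x)))
        = Ψ.symm (θ x) := by
      funext q
      simp only [LinearMap.pi_apply, LinearMap.comp_apply, LinearMap.proj_apply]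
      exact hπ _
    rw [h7, Ψ.apply_symm_apply, θ.symm_apply_apply]
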